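/- Let γ ∈ (1/4, 1/2). Then there is a constant C (depending only on γ) such that for every c ≥ 1/4, ∫_0^∞ dη / (√η · ⟨η - c⟩^{2γ}) ≤ C · c^{(1-4γ)/2}. In particular, setting c = ξ²/4 with ξ ≥ 1, the integral is bounded by C' ξ^{1-4γ}. -/

import Mathlib

open MeasureTheory

noncomputable def jb (x : ℝ) : ℝ := Real.sqrt (1 + x ^ 2)

private lemma jb_nonneg (x : ℝ) : 0 ≤ jb x := Real.sqrt_nonneg _

private lemma jb_pos (x : ℝ) : 0 < jb x :=
  Real.sqrt_pos.2 (by nlinarith [sq_nonneg x])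

private lemma abs_le_jb (x : ℝ) : |x| ≤ jb x := by
  rw [← Real.sqrt_sq_eq_abs]
  exact Real.sqrt_le_sqrt (by nlinarith)

private lemma one_add_abs_le_two_jb (x : ℝ) : 1 + |x| ≤ 2 * jb x := by
  have h1 : (1 + |x|) = Real.sqrt ((1 + |x|) ^ 2) :=
    (Real.sqrt_sq (by positivity)).symm
  have h4 : Real.sqrt 4 = 2 := by
    rw [show (4:ℝ) = 2 ^ 2 by norm_num, Real.sqrt_sq (by norm_num : (0:ℝ) ≤ 2)]
  have h2 : (2:ℝ) * jb x = Real.sqrt (4 * (1 + x ^ 2)) := by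
    rw [jb, Real.sqrt_mul (by norm_num : (0:ℝ) ≤ 4), h4]
  rw [h1, h2]
  apply Real.sqrt_le_sqrt
  nlinarith [sq_abs x, abs_nonneg x]

set_option maxHeartbeats 1000000 in
private lemma key (γ c : ℝ) (hγ1 : 1/4 < γ) (hγ2 : γ < 1/2) (hc : 1/4 ≤ c) :
    ∫ η in Set.Ioi (0:ℝ), 1 / (Real.sqrt η * jb (η - c) ^ (2 * γ))
      ≤ (4 + 40/(1-2*γ) + 2/(2*γ-1/2)) * c ^ ((1 - 4 * γ) / 2) := by
  have hc0 : (0:ℝ) < c := by linarith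
  have hc2 : (0:ℝ) < c/2 := by linarith
  have hp0 : (0:ℝ) < 2*γ := by linarith
  have hp1 : 2*γ < 1 := by linarith
  set f : ℝ → ℝ := fun η => 1 / (Real.sqrt η * jb (η - c) ^ (2 * γ)) with hfdef
  set e : ℝ := (1 - 4*γ)/2 with he
  have hce : 0 < c ^ e := Real.rpow_pos_of_pos hc0 _
  have hf0 : ∀ η, 0 ≤ f η := fun η =>
    div_nonneg zero_le_one
      (mul_nonneg (Real.sqrt_nonneg _) (Real.rpow_nonneg (jb_nonneg _) _))
  have hjbcont : Continuous jb := by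
    unfold jb
    exact (continuous_const.add (continuous_pow 2)).sqrt
  have hfm : Measurable f := by
    have hcont : Continuous fun η : ℝ => Real.sqrt η * jb (η - c) ^ (2*γ) := by
      apply Real.continuous_sqrt.mul
      apply Continuous.rpow_const (hjbcont.comp (continuous_id.sub continuous_const))
      exact fun x => Or.inl (jb_pos _).ne'
    exact measurable_const.div hcont.measurable
  -- generic step
  have step : ∀ (S : Set ℝ), MeasurableSet S → ∀ (g : ℝ → ℝ) (B : ℝ),
      IntegrableOn g S volume → (∀ η ∈ S, f η ≤ g η) → (∫ η in S, g η) ≤ B →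
      IntegrableOn f S volume ∧ (∫ η in S, f η) ≤ B := by
    intro S hS g B hg hfg hB
    have hint : IntegrableOn f S volume := by
      refine hg.mono' hfm.aestronglyMeasurable ?_
      refine (ae_restrict_iff' hS).2 (Filter.Eventually.of_forall fun η hη => ?_)
      rw [Real.norm_eq_abs, abs_of_nonneg (hf0 η)]
      exact hfg η hη
    exact ⟨hint, le_trans (setIntegral_mono_on hint hg hS hfg) hB⟩
  -- Region 1 : (0, c/2]
  have hr1 : IntegrableOn f (Set.Ioc 0 (c/2)) volume ∧
      (∫ η in Set.Ioc (0:ℝ) (c/2), f η) ≤ 4 * c ^ e := by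
    apply step _ measurableSet_Ioc (fun η => (c/2) ^ (-(2*γ)) * η ^ (-(1/2):ℝ))
    · exact ((intervalIntegral.intervalIntegrable_rpow'
        (by norm_num : (-1:ℝ) < -(1/2))).const_mul _).1
    · rintro η ⟨hη0, hηc⟩
      have hjb : c/2 ≤ jb (η - c) := by
        refine le_trans ?_ (abs_le_jb _)
        rw [abs_of_neg (by linarith : η - c < 0)]
        linarith
      have hsη : 0 < Real.sqrt η := Real.sqrt_pos.2 hη0
      have h2 : Real.sqrt η * (c/2) ^ (2*γ) ≤ Real.sqrt η * jb (η-c) ^ (2*γ) :=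
        mul_le_mul_of_nonneg_left (Real.rpow_le_rpow hc2.le hjb hp0.le) hsη.le
      have h1 : (0:ℝ) < Real.sqrt η * (c/2) ^ (2*γ) := by
        have := Real.rpow_pos_of_pos hc2 (2*γ); positivity
      calc f η ≤ 1 / (Real.sqrt η * (c/2) ^ (2*γ)) := one_div_le_one_div_of_le h1 h2
        _ = (c/2) ^ (-(2*γ)) * η ^ (-(1/2):ℝ) := by
            rw [one_div, mul_inv, Real.rpow_neg hc2.le, Real.rpow_neg hη0.le,
              Real.sqrt_eq_rpow, mul_comm]
    · rw [← intervalIntegral.integral_of_le hc2.le,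
        intervalIntegral.integral_const_mul,
        integral_rpow (Or.inl (by norm_num : (-1:ℝ) < -(1/2)))]
      have hexp : (-(1/2):ℝ) + 1 = 1/2 := by norm_num
      rw [hexp, Real.zero_rpow (by norm_num : (1/2:ℝ) ≠ 0)]
      have heq : (c/2) ^ (-(2*γ)) * (((c/2) ^ ((1:ℝ)/2) - 0) / (1/2)) = 2 * (c/2) ^ e := by
        rw [sub_zero, show e = -(2*γ) + 1/2 by rw [he]; ring, Real.rpow_add hc2]
        ring
      rw [heq]
      have h1 : (c/2:ℝ) ^ e = c ^ e / 2 ^ e := Real.div_rpow hc0.le (by norm_num) e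
      have hB : (0:ℝ) < 2 ^ e := Real.rpow_pos_of_pos two_pos _
      have h2e : (1:ℝ)/2 ≤ (2:ℝ) ^ e := by
        calc (1:ℝ)/2 = (2:ℝ) ^ (-1:ℝ) := by rw [Real.rpow_neg_one]; norm_num
        _ ≤ 2 ^ e := Real.rpow_le_rpow_of_exponent_le one_le_two (by rw [he]; linarith)
      rw [h1, show 2 * (c ^ e / 2 ^ e) = (2 * c ^ e) / 2 ^ e by ring,
        div_le_iff₀ hB]
      nlinarith
  -- Region 4 : (2c, ∞)
  have hr4 : IntegrableOn f (Set.Ioi (2*c)) volume ∧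
      (∫ η in Set.Ioi (2*c), f η) ≤ 2/(2*γ-1/2) * c ^ e := by
    apply step _ measurableSet_Ioi (fun η => 2 * η ^ (-(1/2) - 2*γ))
    · exact (integrableOn_Ioi_rpow_of_lt (by linarith) (by linarith)).const_mul 2
    · intro η hη
      rw [Set.mem_Ioi] at hη
      have hη0 : (0:ℝ) < η := by linarith
      have hjb : η/2 ≤ jb (η - c) :=
        le_trans (le_trans (by linarith) (le_abs_self (η - c))) (abs_le_jb _)
      have h21 : (2:ℝ) ^ (2*γ) ≤ 2 := by
        calc (2:ℝ) ^ (2*γ) ≤ 2 ^ (1:ℝ) :=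
          Real.rpow_le_rpow_of_exponent_le one_le_two hp1.le
        _ = 2 := Real.rpow_one 2
      have hprod : η ^ ((1:ℝ)/2 + 2*γ) / 2 ≤ Real.sqrt η * jb (η - c) ^ (2*γ) := by
        have e1 : Real.sqrt η * (η/2) ^ (2*γ) ≤ Real.sqrt η * jb (η-c) ^ (2*γ) :=
          mul_le_mul_of_nonneg_left (Real.rpow_le_rpow (by positivity) hjb hp0.le)
            (Real.sqrt_nonneg _)
        refine le_trans ?_ e1
        rw [Real.div_rpow hη0.le (by norm_num), Real.rpow_add hη0, Real.sqrt_eq_rpow,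
          mul_div_assoc]
        have h0 : (0:ℝ) ≤ η ^ ((1:ℝ)/2) := Real.rpow_nonneg hη0.le _
        apply mul_le_mul_of_nonneg_left _ h0
        have hB : (0:ℝ) < 2 ^ (2*γ) := Real.rpow_pos_of_pos two_pos _
        rw [div_le_div_iff₀ two_pos hB]
        nlinarith [Real.rpow_nonneg hη0.le (2*γ)]
      have hpos : (0:ℝ) < η ^ ((1:ℝ)/2 + 2*γ) / 2 := by
        have := Real.rpow_pos_of_pos hη0 ((1:ℝ)/2 + 2*γ); positivity
      calc f η ≤ 1 / (η ^ ((1:ℝ)/2 + 2*γ) / 2) := one_div_le_one_div_of_le hpos hprod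
        _ = 2 * η ^ (-(1/2) - 2*γ) := by
            rw [one_div_div, show (-(1/2) - 2*γ : ℝ) = -((1:ℝ)/2 + 2*γ) by ring,
              Real.rpow_neg hη0.le, div_eq_mul_inv]
    · rw [MeasureTheory.integral_const_mul, integral_Ioi_rpow_of_lt (by linarith) (by linarith)]
      rw [show (-(1/2) - 2*γ + 1 : ℝ) = e by rw [he]; ring]
      have h2e1 : (2:ℝ) ^ e ≤ 1 :=
        Real.rpow_le_one_of_one_le_of_nonpos one_le_two (by rw [he]; linarith)
      have hmul : (2*c) ^ e = 2 ^ e * c ^ e := Real.mul_rpow (by norm_num) hc0.le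
      have hd : (0:ℝ) < 2*γ - 1/2 := by linarith
      have hB : (0:ℝ) < 2 ^ e := Real.rpow_pos_of_pos two_pos _
      have hA : (2 : ℝ) * (-(2*c) ^ e / e) = 2 * ((2*c) ^ e) / (2*γ-1/2) := by
        rw [show e = -(2*γ - 1/2) by rw [he]; ring, div_neg, neg_div, neg_neg]
        ring
      rw [hA]
      rw [hmul, div_le_iff₀ hd, show 2/(2*γ-1/2) * c ^ e * (2*γ-1/2)
        = 2 * c ^ e * ((2*γ-1/2) / (2*γ-1/2)) by ring, div_self hd.ne']
      nlinarith
  -- shared facts for regions 2,3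
  have hsc : c ^ ((1:ℝ)/2) / 2 ≤ Real.sqrt (c/2) := by
    rw [← Real.sqrt_eq_rpow]
    have h14 : Real.sqrt (1/4 : ℝ) = 1/2 := by
      rw [show (1/4:ℝ) = (1/2)^2 by norm_num, Real.sqrt_sq (by norm_num : (0:ℝ) ≤ 1/2)]
    have : Real.sqrt c / 2 = Real.sqrt (c * (1/4)) := by
      rw [Real.sqrt_mul hc0.le, h14]; ring
    rw [this]
    exact Real.sqrt_le_sqrt (by linarith)
  have h21 : (2:ℝ) ^ (2*γ) ≤ 2 := by
    calc (2:ℝ) ^ (2*γ) ≤ 2 ^ (1:ℝ) :=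
      Real.rpow_le_rpow_of_exponent_le one_le_two hp1.le
    _ = 2 := Real.rpow_one 2
  have hmid : ∀ η : ℝ, c/2 ≤ η → (0:ℝ) ≤ 1 + |η - c| →
      c ^ ((1:ℝ)/2) * (1 + |η - c|) ^ (2*γ) / 4 ≤ Real.sqrt η * jb (η - c) ^ (2*γ) := by
    intro η hη habs
    have hjbb : (1 + |η - c|) / 2 ≤ jb (η - c) := by
      have h := one_add_abs_le_two_jb (η - c)
      linarith [jb_nonneg (η - c)]
    have e1 : Real.sqrt (c/2) * ((1 + |η - c|)/2) ^ (2*γ)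
        ≤ Real.sqrt η * jb (η - c) ^ (2*γ) := by
      apply mul_le_mul (Real.sqrt_le_sqrt hη)
        (Real.rpow_le_rpow (by positivity) hjbb hp0.le)
        (Real.rpow_nonneg (by positivity) _) (Real.sqrt_nonneg _)
    refine le_trans ?_ e1
    rw [Real.div_rpow habs (by norm_num)]
    have hnum : (0:ℝ) ≤ (1 + |η - c|) ^ (2*γ) := Real.rpow_nonneg habs _
    have hB : (0:ℝ) < 2 ^ (2*γ) := Real.rpow_pos_of_pos two_pos _
    calc c ^ ((1:ℝ)/2) * (1 + |η - c|) ^ (2*γ) / 4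
        = (c ^ ((1:ℝ)/2) / 2) * ((1 + |η - c|) ^ (2*γ) / 2) := by ring
      _ ≤ Real.sqrt (c/2) * ((1 + |η - c|) ^ (2*γ) / 2 ^ (2*γ)) := by
          apply mul_le_mul hsc ?_ (by positivity) (Real.sqrt_nonneg _)
          rw [div_le_div_iff₀ two_pos hB]
          nlinarith
  have hcpos12 : (0:ℝ) < c ^ ((1:ℝ)/2) := Real.rpow_pos_of_pos hc0 _
  -- the integral bound shared by regions 2 and 3:
  have hval : ∀ X : ℝ, X ≤ 5*c →  1 ≤ X →
      4 * c ^ (-(1/2):ℝ) * ((X ^ (-(2*γ)+1) - 1 ^ (-(2*γ)+1)) / (-(2*γ)+1))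
        ≤ 20/(1-2*γ) * c ^ e := by
    intro X h5 h1X
    rw [Real.one_rpow]
    have hb1 : X ^ (-(2*γ)+1) ≤ (5*c) ^ (-(2*γ)+1) :=
      Real.rpow_le_rpow (by linarith) h5 (by linarith)
    have hb2 : (5*c) ^ (-(2*γ)+1) = 5 ^ (-(2*γ)+1) * c ^ (-(2*γ)+1) :=
      Real.mul_rpow (by norm_num) hc0.le
    have hb3 : (5:ℝ) ^ (-(2*γ)+1) ≤ 5 := by
      calc (5:ℝ) ^ (-(2*γ)+1) ≤ 5 ^ (1:ℝ) :=
        Real.rpow_le_rpow_of_exponent_le (by norm_num) (by linarith)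
      _ = 5 := Real.rpow_one 5
    have hcp : (0:ℝ) ≤ c ^ (-(2*γ)+1) := Real.rpow_nonneg hc0.le _
    have hX5 : X ^ (-(2*γ)+1) ≤ 5 * c ^ (-(2*γ)+1) := by
      nlinarith
    have hkey : 4 * c ^ (-(1/2):ℝ) * ((5 * c ^ (-(2*γ)+1)) / (1-2*γ))
        = 20/(1-2*γ) * c ^ e := by
      have hcc : c ^ (-(1/2):ℝ) * c ^ (-(2*γ)+1) = c ^ e := by
        rw [← Real.rpow_add hc0, show (-(1/2) + (-(2*γ)+1) : ℝ) = e by rw [he]; ring]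
      calc 4 * c ^ (-(1/2):ℝ) * ((5 * c ^ (-(2*γ)+1)) / (1-2*γ))
          = 20/(1-2*γ) * (c ^ (-(1/2):ℝ) * c ^ (-(2*γ)+1)) := by ring
        _ = 20/(1-2*γ) * c ^ e := by rw [hcc]
    rw [← hkey]
    have hcm : (0:ℝ) ≤ c ^ (-(1/2):ℝ) := Real.rpow_nonneg hc0.le _
    have h1m : (0:ℝ) < 1 - 2*γ := by linarith
    gcongr <;> linarith
  -- pointwise bound for regions 2,3
  have hptw : ∀ η : ℝ, c/2 < η → f η ≤ 4 * c ^ (-(1/2):ℝ) * (1 + |η - c|) ^ (-(2*γ)) := by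
    intro η hη
    have habs : (0:ℝ) ≤ 1 + |η - c| := by positivity
    have habs' : (0:ℝ) < 1 + |η - c| := by positivity
    have hpow : (0:ℝ) < (1 + |η - c|) ^ (2*γ) := Real.rpow_pos_of_pos habs' _
    have hden : (0:ℝ) < c ^ ((1:ℝ)/2) * (1 + |η - c|) ^ (2*γ) / 4 := by positivity
    calc f η ≤ 1 / (c ^ ((1:ℝ)/2) * (1 + |η - c|) ^ (2*γ) / 4) :=
        one_div_le_one_div_of_le hden (hmid η hη.le habs)
      _ = 4 * c ^ (-(1/2):ℝ) * (1 + |η - c|) ^ (-(2*γ)) := by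
          rw [Real.rpow_neg hc0.le, Real.rpow_neg habs]
          simp only [div_eq_mul_inv, one_mul, mul_inv, inv_inv]
          ring
  -- Region 2 : (c/2, c]
  have hr2 : IntegrableOn f (Set.Ioc (c/2) c) volume ∧
      (∫ η in Set.Ioc (c/2) c, f η) ≤ 20/(1-2*γ) * c ^ e := by
    apply step _ measurableSet_Ioc
      (fun η => 4 * c ^ (-(1/2):ℝ) * ((1+c) - η) ^ (-(2*γ)))
    · have hii : IntervalIntegrable (fun η => ((1+c) - η) ^ (-(2*γ))) volume (c/2) c := by
        apply ContinuousOn.intervalIntegrable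
        apply ContinuousOn.rpow_const ((continuous_const.sub continuous_id).continuousOn)
        intro x hx
        rw [Set.uIcc_of_le (by linarith : c/2 ≤ c), Set.mem_Icc] at hx
        exact Or.inl (by intro h; simp only [Pi.sub_apply, id_eq] at h; nlinarith [hx.2])
      exact (hii.const_mul _).1
    · rintro η ⟨hη1, hη2⟩
      have := hptw η hη1
      rwa [abs_of_nonpos (by linarith : η - c ≤ 0),
        show 1 + -(η - c) = (1+c) - η by ring] at this
    · rw [← intervalIntegral.integral_of_le (by linarith : c/2 ≤ c),
        intervalIntegral.integral_const_mul]
      rw [intervalIntegral.integral_comp_sub_left (fun u : ℝ => u ^ (-(2*γ))) (1+c),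
        show (1+c) - c = 1 by ring, show (1+c) - c/2 = 1 + c/2 by ring,
        integral_rpow (Or.inl (by linarith : (-1:ℝ) < -(2*γ)))]
      exact hval (1 + c/2) (by linarith) (by linarith)
  -- Region 3 : (c, 2c]
  have hr3 : IntegrableOn f (Set.Ioc c (2*c)) volume ∧
      (∫ η in Set.Ioc c (2*c), f η) ≤ 20/(1-2*γ) * c ^ e := by
    apply step _ measurableSet_Ioc
      (fun η => 4 * c ^ (-(1/2):ℝ) * (η - (c-1)) ^ (-(2*γ)))
    · have hii : IntervalIntegrable (fun η => (η - (c-1)) ^ (-(2*γ))) volume c (2*c) := by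
        apply ContinuousOn.intervalIntegrable
        apply ContinuousOn.rpow_const ((continuous_id.sub continuous_const).continuousOn)
        intro x hx
        rw [Set.uIcc_of_le (by linarith : c ≤ 2*c), Set.mem_Icc] at hx
        exact Or.inl (by intro h; simp only [Pi.sub_apply, id_eq] at h; nlinarith [hx.1])
      exact (hii.const_mul _).1
    · rintro η ⟨hη1, hη2⟩
      have := hptw η (by linarith)
      rwa [abs_of_nonneg (by linarith : (0:ℝ) ≤ η - c),
        show 1 + (η - c) = η - (c-1) by ring] at this
    · rw [← intervalIntegral.integral_of_le (by linarith : c ≤ 2*c),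
        intervalIntegral.integral_const_mul]
      rw [intervalIntegral.integral_comp_sub_right (fun u : ℝ => u ^ (-(2*γ))) (c-1),
        show c - (c-1) = 1 by ring, show 2*c - (c-1) = 1 + c by ring,
        integral_rpow (Or.inl (by linarith : (-1:ℝ) < -(2*γ)))]
      exact hval (1 + c) (by linarith) (by linarith)
  -- combine
  obtain ⟨i1, b1⟩ := hr1
  obtain ⟨i2, b2⟩ := hr2
  obtain ⟨i3, b3⟩ := hr3
  obtain ⟨i4, b4⟩ := hr4
  have u12 : Set.Ioc (0:ℝ) (c/2) ∪ Set.Ioc (c/2) c = Set.Ioc 0 c :=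
    Set.Ioc_union_Ioc_eq_Ioc (by linarith) (by linarith)
  have u123 : Set.Ioc (0:ℝ) c ∪ Set.Ioc c (2*c) = Set.Ioc 0 (2*c) :=
    Set.Ioc_union_Ioc_eq_Ioc (by linarith) (by linarith)
  have uall : Set.Ioc (0:ℝ) (2*c) ∪ Set.Ioi (2*c) = Set.Ioi 0 :=
    Set.Ioc_union_Ioi_eq_Ioi (by linarith)
  have i12 : IntegrableOn f (Set.Ioc 0 c) volume := by rw [← u12]; exact i1.union i2
  have i123 : IntegrableOn f (Set.Ioc 0 (2*c)) volume := by rw [← u123]; exact i12.union i3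
  have e12 : (∫ η in Set.Ioc (0:ℝ) c, f η)
      = (∫ η in Set.Ioc (0:ℝ) (c/2), f η) + ∫ η in Set.Ioc (c/2) c, f η := by
    rw [← u12, setIntegral_union (Set.Ioc_disjoint_Ioc_of_le le_rfl) measurableSet_Ioc i1 i2]
  have e123 : (∫ η in Set.Ioc (0:ℝ) (2*c), f η)
      = (∫ η in Set.Ioc (0:ℝ) c, f η) + ∫ η in Set.Ioc c (2*c), f η := by
    rw [← u123, setIntegral_union (Set.Ioc_disjoint_Ioc_of_le le_rfl) measurableSet_Ioc i12 i3]
  have eall : (∫ η in Set.Ioi (0:ℝ), f η)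
      = (∫ η in Set.Ioc (0:ℝ) (2*c), f η) + ∫ η in Set.Ioi (2*c), f η := by
    rw [← uall, setIntegral_union Set.Ioc_disjoint_Ioi_same measurableSet_Ioi i123 i4]
  rw [show (4 + 40/(1-2*γ) + 2/(2*γ-1/2)) * c ^ e
    = 4 * c ^ e + (20/(1-2*γ) * c ^ e + (20/(1-2*γ) * c ^ e + 2/(2*γ-1/2) * c ^ e))
    by ring]
  rw [eall, e123, e12]
  linarith

theorem stmt_4 (γ : ℝ) (hγ : γ ∈ Set.Ioo (1/4 : ℝ) (1/2 : ℝ)) :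
    (∃ C : ℝ, ∀ c : ℝ, 1/4 ≤ c →
      ∫ η in Set.Ioi (0:ℝ), 1 / (Real.sqrt η * jb (η - c) ^ (2 * γ))
        ≤ C * c ^ ((1 - 4 * γ) / 2)) ∧
    ∃ C' : ℝ, ∀ ξ : ℝ, 1 ≤ ξ →
      ∫ η in Set.Ioi (0:ℝ), 1 / (Real.sqrt η * jb (η - ξ ^ 2 / 4) ^ (2 * γ))
        ≤ C' * ξ ^ (1 - 4 * γ) := by
  obtain ⟨hγ1, hγ2⟩ := hγ
  set C : ℝ := 4 + 40/(1-2*γ) + 2/(2*γ-1/2) with hC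
  constructor
  · exact ⟨C, fun c hc => key γ c hγ1 hγ2 hc⟩
  · refine ⟨C * (1/4 : ℝ) ^ ((1 - 4*γ)/2), fun ξ hξ => ?_⟩
    have hξ0 : (0:ℝ) < ξ := by linarith
    have hc : (1/4 : ℝ) ≤ ξ ^ 2 / 4 := by nlinarith
    have h := key γ (ξ ^ 2 / 4) hγ1 hγ2 hc
    have heq : (ξ ^ 2 / 4) ^ ((1 - 4*γ)/2)
        = (1/4 : ℝ) ^ ((1 - 4*γ)/2) * ξ ^ (1 - 4*γ) := by
      rw [show (ξ ^ 2 / 4 : ℝ) = ξ ^ 2 * (1/4) by ring,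
        Real.mul_rpow (by positivity) (by norm_num),
        ← Real.rpow_natCast ξ 2, ← Real.rpow_mul hξ0.le,
        show ((2:ℕ) : ℝ) * ((1 - 4*γ)/2) = 1 - 4*γ by push_cast; ring]
      ring
    calc _ ≤ C * (ξ ^ 2 / 4) ^ ((1 - 4*γ)/2) := h
      _ = C * (1/4 : ℝ) ^ ((1 - 4*γ)/2) * ξ ^ (1 - 4*γ) := by rw [heq]; ring
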